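/- With b_k the coefficients of φ_n^{(α,β)}(μ) = Σ_k b_k μ^k, one has b_1²/(b_0 b_2) = n(n−1)(α+3)(α+4)(n+α+β+1)(n+α+β+2) / [(n−2)(n−3)(α+1)(α+2)(n+α+β+3)(n+α+β+4)], and this quantity tends to (α+3)(α+4)/((α+1)(α+2)) as n → ∞. Consequently, for every α > (1+√33)/2 and every β, the polynomial φ_n^{(α,β)} has a non-real zero for all sufficiently large n. -/

import Mathlib

open Polynomial

/-- The Jacobi polynomial `P_n^{(α,β)}` as a real polynomial in `x`. -/
noncomputable def jacobiP (α β : ℝ) (n : ℕ) : Polynomial ℝ :=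
  C ((ascPochhammer ℝ n).eval (α + 1) / (n.factorial : ℝ)) *
    ∑ k ∈ Finset.range (n + 1),
      C ((ascPochhammer ℝ k).eval (-(n : ℝ)) * (ascPochhammer ℝ k).eval ((n : ℝ) + α + β + 1) /
          ((k.factorial : ℝ) * (ascPochhammer ℝ k).eval (α + 1))) *
        (C (1 / 2 : ℝ) * (1 - X)) ^ k

/-- `φ_n^{(α,β)}(μ) = Σ_{k=0}^{[n/2]} (d/dx)^{2k} P_n^{(α,β)}(x)|_{x=1} · μ^k`. -/
noncomputable def phi (α β : ℝ) (n : ℕ) : Polynomial ℝ :=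
  ∑ k ∈ Finset.range (n / 2 + 1),
    C ((Polynomial.derivative^[2 * k] (jacobiP α β n)).eval 1) * X ^ k

/-- All complex zeros of `p` are real (i.e. `p` splits over `ℝ`). -/
def RealRooted (p : Polynomial ℝ) : Prop := (p.roots.card : ℕ) = p.natDegree

/-- All zeros of `p` are real and simple. -/
def AllRealSimple (p : Polynomial ℝ) : Prop := RealRooted p ∧ p.roots.Nodup

/-- Zeros of `g` and `h` interlace strictly. -/
def StrictlyInterlacing (g h : Polynomial ℝ) : Prop :=
  AllRealSimple g ∧ AllRealSimple h ∧
  (∀ x : ℝ, ¬(g.IsRoot x ∧ h.IsRoot x)) ∧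
  (∀ x y : ℝ, g.IsRoot x → g.IsRoot y → x < y →
      (∀ t : ℝ, g.IsRoot t → ¬(x < t ∧ t < y)) →
      ∃! z : ℝ, h.IsRoot z ∧ x < z ∧ z < y) ∧
  (∀ x y : ℝ, h.IsRoot x → h.IsRoot y → x < y →
      (∀ t : ℝ, h.IsRoot t → ¬(x < t ∧ t < y)) →
      ∃! z : ℝ, g.IsRoot z ∧ x < z ∧ z < y)

/-- `(g,h)` is a real pair: every real combination has only real zeros.
This is equivalent to non-strict interlacing of the zeros. -/
def RealPair (g h : Polynomial ℝ) : Prop :=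
  ∀ a b : ℝ, RealRooted (C a * g + C b * h)

/-- The zero of `p` closest to the origin, when all zeros of `p` are negative. -/
noncomputable def maxRoot (p : Polynomial ℝ) : ℝ := sSup {x : ℝ | p.IsRoot x}

/-- `f` is Hurwitz stable: all complex zeros lie in the open left half-plane. -/
def HurwitzStable (f : Polynomial ℝ) : Prop :=
  ∀ z : ℂ, Polynomial.aeval z f = 0 → z.re < 0

/- ### Auxiliary lemmas -/

lemma iter_deriv_one_sub_pow (k : ℕ) : ∀ m : ℕ, derivative^[m] ((1 - X : ℝ[X]) ^ k) =
    C ((-1 : ℝ) ^ m * (k.descFactorial m : ℝ)) * (1 - X) ^ (k - m) := by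
  intro m
  induction m with
  | zero => simp
  | succ m ih =>
    rw [Function.iterate_succ_apply', ih, derivative_C_mul, derivative_pow]
    rcases Nat.lt_or_ge m k with h | h
    · have h1 : k - m = (k - (m+1)) + 1 := by omega
      rw [h1]
      simp only [Nat.add_sub_cancel, derivative_sub, derivative_one, derivative_X, zero_sub,
        Nat.descFactorial_succ]
      push_cast [Nat.cast_sub (by omega : m ≤ k)]
      ring_nf
      rw [← neg_mul, ← C_mul, ← C_neg]
      congr 1
      rw [Nat.cast_sub (by omega : 1 + m ≤ k)]
      ring_nf
      congr 1
      push_cast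
      ring
    · have h1 : k - m = 0 := by omega
      have h2 : k.descFactorial (m+1) = 0 := Nat.descFactorial_eq_zero_iff_lt.2 (by omega)
      simp [h1, h2]

lemma eval_one_iter_deriv (k m : ℕ) : eval 1 (derivative^[m] ((1 - X : ℝ[X]) ^ k)) =
    if k = m then (-1 : ℝ) ^ m * (m.factorial : ℝ) else 0 := by
  rw [iter_deriv_one_sub_pow]
  rcases eq_or_ne k m with rfl | h
  · simp [Nat.descFactorial_self]
  · rcases Nat.lt_or_ge k m with h2 | h2
    · simp [Nat.descFactorial_eq_zero_iff_lt.2 h2, if_neg h]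
    · have : k - m ≠ 0 := by omega
      simp [zero_pow this, if_neg h]

lemma eval_one_iter_deriv_jacobiP (α β : ℝ) (n m : ℕ) (hm : m ≤ n) :
    eval 1 (derivative^[m] (jacobiP α β n)) =
      ((ascPochhammer ℝ n).eval (α + 1) / (n.factorial : ℝ)) *
      (((ascPochhammer ℝ m).eval (-(n:ℝ)) * (ascPochhammer ℝ m).eval ((n:ℝ)+α+β+1) /
        ((m.factorial : ℝ) * (ascPochhammer ℝ m).eval (α+1))) *
      ((1/2 : ℝ)^m * ((-1 : ℝ)^m * (m.factorial : ℝ)))) := by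
  rw [jacobiP, iterate_derivative_C_mul, eval_mul, eval_C]
  congr 1
  rw [iterate_derivative_sum, eval_finset_sum]
  rw [Finset.sum_eq_single m (fun k _ hk => by
      rw [mul_pow, ← C_pow, iterate_derivative_C_mul, iterate_derivative_C_mul, eval_mul, eval_C,
        eval_mul, eval_C, eval_one_iter_deriv, if_neg hk, mul_zero, mul_zero])
    (fun h => absurd (Finset.mem_range.2 (by omega)) h)]
  rw [mul_pow, ← C_pow, iterate_derivative_C_mul, iterate_derivative_C_mul, eval_mul, eval_C,
    eval_mul, eval_C, eval_one_iter_deriv, if_pos rfl]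

lemma phi_coeff (α β : ℝ) (n j : ℕ) (hj : j ≤ n / 2) :
    (phi α β n).coeff j = eval 1 (derivative^[2*j] (jacobiP α β n)) := by
  rw [phi, finset_sum_coeff]
  rw [Finset.sum_eq_single j (fun k _ hk => by
      simp [coeff_C_mul, coeff_X_pow, if_neg (Ne.symm hk)])
    (fun h => absurd (Finset.mem_range.2 (by omega)) h)]
  simp [coeff_C_mul, coeff_X_pow]

lemma asc2 (x : ℝ) : (ascPochhammer ℝ 2).eval x = x * (x+1) := by
  show (ascPochhammer ℝ (1+1)).eval x = _
  rw [ascPochhammer_succ_eval, ascPochhammer_one]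
  push_cast; simp

lemma asc4 (x : ℝ) : (ascPochhammer ℝ 4).eval x = x * (x+1) * (x+2) * (x+3) := by
  show (ascPochhammer ℝ (2+1+1)).eval x = _
  rw [ascPochhammer_succ_eval, ascPochhammer_succ_eval, asc2]
  push_cast; ring

lemma phi_coeff0 (α β : ℝ) (n : ℕ) (hn : 4 ≤ n) :
    (phi α β n).coeff 0 = (ascPochhammer ℝ n).eval (α + 1) / (n.factorial : ℝ) := by
  rw [phi_coeff α β n 0 (by omega), show 2*0 = 0 from rfl,
    eval_one_iter_deriv_jacobiP α β n 0 (by omega)]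
  simp

lemma phi_coeff1 (α β : ℝ) (n : ℕ) (hα : -1 < α) (hn : 4 ≤ n) :
    (phi α β n).coeff 1 = ((ascPochhammer ℝ n).eval (α + 1) / (n.factorial : ℝ)) *
      ((n:ℝ) * ((n:ℝ)-1) * (((n:ℝ)+α+β+1) * ((n:ℝ)+α+β+2)) / (4*(α+1)*(α+2))) := by
  rw [phi_coeff α β n 1 (by omega), show 2*1 = 2 from rfl,
    eval_one_iter_deriv_jacobiP α β n 2 (by omega)]
  simp only [asc2]
  have h1 : α + 1 ≠ 0 := by linarith
  have h2 : α + 1 + 1 ≠ 0 := by linarith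
  rw [show ((Nat.factorial 2 : ℕ) : ℝ) = 2 by norm_num [Nat.factorial]]
  congr 1
  rw [div_mul_eq_mul_div, div_eq_div_iff (ne_of_gt (by nlinarith)) (ne_of_gt (by nlinarith))]
  ring

lemma phi_coeff2 (α β : ℝ) (n : ℕ) (hα : -1 < α) (hn : 4 ≤ n) :
    (phi α β n).coeff 2 = ((ascPochhammer ℝ n).eval (α + 1) / (n.factorial : ℝ)) *
      ((n:ℝ) * ((n:ℝ)-1) * ((n:ℝ)-2) * ((n:ℝ)-3) *
        (((n:ℝ)+α+β+1) * ((n:ℝ)+α+β+2) * ((n:ℝ)+α+β+3) * ((n:ℝ)+α+β+4)) /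
        (16*(α+1)*(α+2)*(α+3)*(α+4))) := by
  rw [phi_coeff α β n 2 (by omega), show 2*2 = 4 from rfl,
    eval_one_iter_deriv_jacobiP α β n 4 (by omega)]
  simp only [asc4]
  have h1 : α + 1 ≠ 0 := by linarith
  have h2 : α + 1 + 1 ≠ 0 := by linarith
  have h3 : α + 1 + 2 ≠ 0 := by linarith
  have h4 : α + 1 + 3 ≠ 0 := by linarith
  have a1 : (0:ℝ) < α+1 := by linarith
  have a2 : (0:ℝ) < α+1+1 := by linarith
  have a3 : (0:ℝ) < α+1+2 := by linarith
  have a4 : (0:ℝ) < α+1+3 := by linarith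
  have a5 : (0:ℝ) < α+2 := by linarith
  have a6 : (0:ℝ) < α+3 := by linarith
  have a7 : (0:ℝ) < α+4 := by linarith
  rw [show ((Nat.factorial 4 : ℕ) : ℝ) = 24 by norm_num [Nat.factorial]]
  congr 1
  rw [div_mul_eq_mul_div, div_eq_div_iff
    (ne_of_gt (by nlinarith [mul_pos (mul_pos (mul_pos a1 a2) a3) a4]))
    (ne_of_gt (by nlinarith [mul_pos (mul_pos (mul_pos a1 a5) a6) a7]))]
  ring

lemma ratio_eq (α β : ℝ) (n : ℕ) (hα : -1 < α) (hn : 4 ≤ n) :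
    ((phi α β n).coeff 1) ^ 2 / ((phi α β n).coeff 0 * (phi α β n).coeff 2) =
      ((n : ℝ) * ((n : ℝ) - 1) * (α + 3) * (α + 4) *
          ((n : ℝ) + α + β + 1) * ((n : ℝ) + α + β + 2)) /
        (((n : ℝ) - 2) * ((n : ℝ) - 3) * (α + 1) * (α + 2) *
          ((n : ℝ) + α + β + 3) * ((n : ℝ) + α + β + 4)) := by
  rw [phi_coeff0 α β n hn, phi_coeff1 α β n hα hn, phi_coeff2 α β n hα hn]
  have hn4 : (4:ℝ) ≤ (n:ℝ) := by exact_mod_cast hn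
  by_cases h3 : ((n:ℝ)+α+β+3) = 0
  · rw [h3]; simp
  by_cases h4 : ((n:ℝ)+α+β+4) = 0
  · rw [h4]; simp
  by_cases h1 : ((n:ℝ)+α+β+1) = 0
  · rw [h1]; simp
  by_cases h2 : ((n:ℝ)+α+β+2) = 0
  · rw [h2]; simp
  have a1 : (0:ℝ) < α+1 := by linarith
  have a2 : (0:ℝ) < α+2 := by linarith
  have a3 : (0:ℝ) < α+3 := by linarith
  have a4 : (0:ℝ) < α+4 := by linarith
  have hA : (0:ℝ) < (ascPochhammer ℝ n).eval (α + 1) / (n.factorial : ℝ) :=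
    div_pos (ascPochhammer_pos n (α+1) (by linarith)) (Nat.cast_pos.2 n.factorial_pos)
  have e1 : (n:ℝ) ≠ 0 := by linarith
  have e2 : (n:ℝ) - 1 ≠ 0 := by linarith
  have e3 : (n:ℝ) - 2 ≠ 0 := by linarith
  have e4 : (n:ℝ) - 3 ≠ 0 := by linarith
  have key : ∀ (A a b c d c1 c2 c3 c4 S1 S2 S3 S4 : ℝ), A ≠ 0 → a ≠ 0 → b ≠ 0 → c ≠ 0 → d ≠ 0 →
      c1 ≠ 0 → c2 ≠ 0 → c3 ≠ 0 → c4 ≠ 0 → S1 ≠ 0 → S2 ≠ 0 → S3 ≠ 0 → S4 ≠ 0 →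
      (A * (a*b*(S1*S2)/(4*c1*c2)))^2 / (A * (A * (a*b*c*d*(S1*S2*S3*S4)/(16*c1*c2*c3*c4)))) =
        a*b*c3*c4*S1*S2/(c*d*c1*c2*S3*S4) := by
    intros A a b c d c1 c2 c3 c4 S1 S2 S3 S4 hA ha hb hc hd hc1 hc2 hc3 hc4 hS1 hS2 hS3 hS4
    field_simp
    ring
  exact key _ _ _ _ _ _ _ _ _ _ _ _ _ hA.ne' e1 e2 e3 e4 a1.ne' a2.ne' a3.ne' a4.ne' h1 h2 h3 h4

open Filter in
lemma tendsto_ratio (α β : ℝ) : Filter.Tendsto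
    (fun n : ℕ =>
      ((n : ℝ) * ((n : ℝ) - 1) * (α + 3) * (α + 4) *
          ((n : ℝ) + α + β + 1) * ((n : ℝ) + α + β + 2)) /
        (((n : ℝ) - 2) * ((n : ℝ) - 3) * (α + 1) * (α + 2) *
          ((n : ℝ) + α + β + 3) * ((n : ℝ) + α + β + 4)))
    Filter.atTop (nhds ((α + 3) * (α + 4) / ((α + 1) * (α + 2)))) := by
  by_cases hc3 : α + 3 = 0
  · simp only [hc3, mul_zero, zero_mul, zero_div]
    exact tendsto_const_nhds
  by_cases hc4 : α + 4 = 0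
  · simp only [hc4, mul_zero, zero_mul, zero_div]
    exact tendsto_const_nhds
  by_cases hc1 : α + 1 = 0
  · simp only [hc1, mul_zero, zero_mul, div_zero]
    exact tendsto_const_nhds
  by_cases hc2 : α + 2 = 0
  · simp only [hc2, mul_zero, zero_mul, div_zero]
    exact tendsto_const_nhds
  set G : ℝ → ℝ := fun x =>
    ((1 - x) * (α+3) * (α+4) * (1 + (α+β+1)*x) * (1 + (α+β+2)*x)) /
      ((1 - 2*x) * (1 - 3*x) * (α+1) * (α+2) * (1 + (α+β+3)*x) * (1 + (α+β+4)*x)) with hG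
  have hcont : ContinuousAt G 0 := by
    apply ContinuousAt.div (by fun_prop) (by fun_prop)
    norm_num
    exact ⟨hc1, hc2⟩
  have hval : G 0 = (α + 3) * (α + 4) / ((α + 1) * (α + 2)) := by
    rw [hG]; norm_num
  have h2 : Tendsto (fun n : ℕ => G (1/(n:ℝ))) atTop
      (nhds ((α + 3) * (α + 4) / ((α + 1) * (α + 2)))) := by
    rw [← hval]
    exact hcont.tendsto.comp tendsto_one_div_atTop_nhds_zero_nat
  refine h2.congr' ?_
  filter_upwards [Filter.eventually_ge_atTop 1] with n hn
  have hn0 : (n:ℝ) ≠ 0 := Nat.cast_ne_zero.2 (by omega)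
  rw [hG]
  show _ = _
  rw [show (n : ℝ) * ((n : ℝ) - 1) * (α + 3) * (α + 4) *
          ((n : ℝ) + α + β + 1) * ((n : ℝ) + α + β + 2) =
      (n:ℝ)^4 * ((1 - 1/(n:ℝ)) * (α+3) * (α+4) * (1 + (α+β+1)*(1/(n:ℝ))) * (1 + (α+β+2)*(1/(n:ℝ))))
      from by field_simp; ring]
  rw [show ((n : ℝ) - 2) * ((n : ℝ) - 3) * (α + 1) * (α + 2) *
          ((n : ℝ) + α + β + 3) * ((n : ℝ) + α + β + 4) =
      (n:ℝ)^4 * ((1 - 2*(1/(n:ℝ))) * (1 - 3*(1/(n:ℝ))) * (α+1) * (α+2) *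
        (1 + (α+β+3)*(1/(n:ℝ))) * (1 + (α+β+4)*(1/(n:ℝ)))) from by field_simp; ring]
  rw [mul_div_mul_left _ _ (pow_ne_zero 4 hn0)]

lemma coeff_X_sub_C_mul (a : ℝ) (q : Polynomial ℝ) (k : ℕ) :
    ((X - C a) * q).coeff (k+1) = q.coeff k - a * q.coeff (k+1) := by
  rw [sub_mul, coeff_sub, coeff_X_mul, coeff_C_mul]

lemma coeff_X_sub_C_mul_zero (a : ℝ) (q : Polynomial ℝ) :
    ((X - C a) * q).coeff 0 = -a * q.coeff 0 := by
  rw [sub_mul, coeff_sub, mul_coeff_zero, coeff_X_zero, coeff_C_mul, zero_mul, zero_sub, neg_mul]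

lemma newton_bottom (t : Multiset ℝ) :
    2 * (((t.map fun r => X - C r).prod.coeff 0) * ((t.map fun r => X - C r).prod.coeff 2)) ≤
      ((t.map fun r => X - C r).prod.coeff 1) ^ 2 := by
  induction t using Multiset.induction with
  | empty => simp [Polynomial.coeff_one]
  | cons a t ih =>
    rw [Multiset.map_cons, Multiset.prod_cons]
    have e1 := coeff_X_sub_C_mul a (t.map fun r => X - C r).prod 0
    have e2 := coeff_X_sub_C_mul a (t.map fun r => X - C r).prod 1
    norm_num at e1 e2
    rw [e1, e2, coeff_X_sub_C_mul_zero]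
    nlinarith [sq_nonneg ((t.map fun r => X - C r).prod.coeff 0), sq_nonneg a,
      mul_nonneg (sq_nonneg a) (sub_nonneg.2 ih)]

lemma newton_ineq (p : Polynomial ℝ) (hp : p ≠ 0) (h : ∀ z : ℂ, aeval z p = 0 → z.im = 0) :
    2 * (p.coeff 0 * p.coeff 2) ≤ (p.coeff 1) ^ 2 := by
  set f := algebraMap ℝ ℂ
  have hinj : Function.Injective f := f.injective
  set P := p.map f with hP
  have hP0 : P ≠ 0 := by
    simpa [hP] using (Polynomial.map_ne_zero_iff hinj).2 hp
  have hsplit : P.Splits := IsAlgClosed.splits P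
  have hfac := hsplit.eq_prod_roots
  set t : Multiset ℝ := P.roots.map Complex.re with ht
  have hroots : P.roots.map (fun z => X - C z) = t.map (fun r => X - C (f r)) := by
    rw [ht, Multiset.map_map]
    apply Multiset.map_congr rfl
    intro z hz
    have hz0 : aeval z p = 0 := by
      have := (mem_roots hP0).1 hz
      simpa [hP, IsRoot, eval_map, aeval_def] using this
    have him : z.im = 0 := h z hz0
    have : f z.re = z := by
      apply Complex.ext <;> simp [f, him]
    simp [Function.comp, this]
  have hlc : P.leadingCoeff = f p.leadingCoeff := leadingCoeff_map_of_leadingCoeff_ne_zero f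
    (by simp [f, leadingCoeff_ne_zero.2 hp])
  have key : p = C p.leadingCoeff * (t.map fun r => X - C r).prod := by
    apply Polynomial.map_injective f hinj
    rw [Polynomial.map_mul, Polynomial.map_C, Polynomial.map_multiset_prod, Multiset.map_map,
      ← hP, hfac, hlc, hroots]
    congr 1
    apply congrArg Multiset.prod
    apply Multiset.map_congr rfl
    intro r _
    simp [Function.comp]
  have c0 : p.coeff 0 = p.leadingCoeff * (t.map fun r => X - C r).prod.coeff 0 := by
    conv_lhs => rw [key]
    rw [coeff_C_mul]
  have c1 : p.coeff 1 = p.leadingCoeff * (t.map fun r => X - C r).prod.coeff 1 := by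
    conv_lhs => rw [key]
    rw [coeff_C_mul]
  have c2 : p.coeff 2 = p.leadingCoeff * (t.map fun r => X - C r).prod.coeff 2 := by
    conv_lhs => rw [key]
    rw [coeff_C_mul]
  rw [c0, c1, c2]
  nlinarith [newton_bottom t, sq_nonneg p.leadingCoeff]
theorem phi_coeff_ratio_and_nonreal_zeros :
    (∀ (α β : ℝ) (n : ℕ), -1 < α → 4 ≤ n →
      ((phi α β n).coeff 1) ^ 2 / ((phi α β n).coeff 0 * (phi α β n).coeff 2) =
        ((n : ℝ) * ((n : ℝ) - 1) * (α + 3) * (α + 4) *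
            ((n : ℝ) + α + β + 1) * ((n : ℝ) + α + β + 2)) /
          (((n : ℝ) - 2) * ((n : ℝ) - 3) * (α + 1) * (α + 2) *
            ((n : ℝ) + α + β + 3) * ((n : ℝ) + α + β + 4))) ∧
    (∀ α β : ℝ, Filter.Tendsto
      (fun n : ℕ =>
        ((n : ℝ) * ((n : ℝ) - 1) * (α + 3) * (α + 4) *
            ((n : ℝ) + α + β + 1) * ((n : ℝ) + α + β + 2)) /
          (((n : ℝ) - 2) * ((n : ℝ) - 3) * (α + 1) * (α + 2) *
            ((n : ℝ) + α + β + 3) * ((n : ℝ) + α + β + 4)))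
      Filter.atTop (nhds ((α + 3) * (α + 4) / ((α + 1) * (α + 2))))) ∧
    (∀ α β : ℝ, (1 + Real.sqrt 33) / 2 < α →
      ∃ N : ℕ, ∀ n ≥ N, ∃ z : ℂ, Polynomial.aeval z (phi α β n) = 0 ∧ z.im ≠ 0) := by
  refine ⟨fun α β n hα hn => ratio_eq α β n hα hn, fun α β => tendsto_ratio α β, ?_⟩
  intro α β hα
  have hs5 : (5:ℝ) < Real.sqrt 33 := by
    nlinarith [Real.sq_sqrt (show (0:ℝ) ≤ 33 by norm_num), Real.sqrt_nonneg 33]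
  have hα3 : 3 < α := by linarith
  have hαm1 : -1 < α := by linarith
  have hquad : 0 < α^2 - α - 8 := by
    have h1 : Real.sqrt 33 < 2*α - 1 := by linarith
    nlinarith [Real.sq_sqrt (show (0:ℝ) ≤ 33 by norm_num), Real.sqrt_nonneg 33]
  have hL2 : (α+3)*(α+4)/((α+1)*(α+2)) < 2 := by
    rw [div_lt_iff₀ (by nlinarith)]
    nlinarith
  obtain ⟨N1, hN1⟩ := Filter.eventually_atTop.1 ((tendsto_ratio α β).eventually_lt_const hL2)
  obtain ⟨M, hM⟩ := exists_nat_ge (-(α+β))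
  refine ⟨max (max N1 M) 4, fun n hn => ?_⟩
  have hn4 : 4 ≤ n := le_trans (le_max_right _ _) hn
  have hnN1 : N1 ≤ n := le_trans (le_trans (le_max_left _ _) (le_max_left _ _)) hn
  have hnM : M ≤ n := le_trans (le_trans (le_max_right _ _) (le_max_left _ _)) hn
  by_contra hcon
  push_neg at hcon
  have hcon' : ∀ z : ℂ, Polynomial.aeval z (phi α β n) = 0 → z.im = 0 := by
    intro z hz
    by_contra him
    exact him (hcon z hz)
  have hb0 : 0 < (phi α β n).coeff 0 := by
    rw [phi_coeff0 α β n hn4]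
    exact div_pos (ascPochhammer_pos n (α+1) (by linarith)) (Nat.cast_pos.2 n.factorial_pos)
  have hp0 : phi α β n ≠ 0 := fun hz => by simp [hz] at hb0
  have hn4' : (4:ℝ) ≤ (n:ℝ) := by exact_mod_cast hn4
  have hMn : (M:ℝ) ≤ (n:ℝ) := Nat.cast_le.2 hnM
  have hS1 : (0:ℝ) < (n:ℝ)+α+β+1 := by linarith
  have hS2 : (0:ℝ) < (n:ℝ)+α+β+2 := by linarith
  have hS3 : (0:ℝ) < (n:ℝ)+α+β+3 := by linarith
  have hS4 : (0:ℝ) < (n:ℝ)+α+β+4 := by linarith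
  have pn : (0:ℝ) < (n:ℝ) := by linarith
  have pn1 : (0:ℝ) < (n:ℝ)-1 := by linarith
  have pn2 : (0:ℝ) < (n:ℝ)-2 := by linarith
  have pn3 : (0:ℝ) < (n:ℝ)-3 := by linarith
  have pc1 : (0:ℝ) < α+1 := by linarith
  have pc2 : (0:ℝ) < α+2 := by linarith
  have pc3 : (0:ℝ) < α+3 := by linarith
  have pc4 : (0:ℝ) < α+4 := by linarith
  have hb2 : 0 < (phi α β n).coeff 2 := by
    rw [phi_coeff2 α β n hαm1 hn4]
    apply mul_pos (div_pos (ascPochhammer_pos n (α+1) (by linarith))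
      (Nat.cast_pos.2 n.factorial_pos))
    exact div_pos
      (mul_pos (mul_pos (mul_pos (mul_pos pn pn1) pn2) pn3)
        (mul_pos (mul_pos (mul_pos hS1 hS2) hS3) hS4))
      (mul_pos (mul_pos (mul_pos (mul_pos (by norm_num) pc1) pc2) pc3) pc4)
  have hnewton := newton_ineq _ hp0 hcon'
  have hlt : ((phi α β n).coeff 1)^2 / ((phi α β n).coeff 0 * (phi α β n).coeff 2) < 2 := by
    rw [ratio_eq α β n hαm1 hn4]
    exact hN1 n hnN1
  have := (div_lt_iff₀ (mul_pos hb0 hb2)).1 hlt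
  linarith
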